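/- Let n ≥ 3 be an integer and K a convex body in ℝ² with n-fold rotational symmetry about the origin o, satisfying |K|·|K*| ≤ (1+ε)·n²·sin²(π/n) for some ε > 0. Let x ∈ ℝ², λ₁, λ₂ > 0, and let R_n be a regular n-gon such that λ₁R_n + x ⊆ K ⊆ λ₂R_n + x and λ₂/λ₁ ≤ 1 + 18ε < 1/cos(π/n) ≤ 2. Assume further that the n-gon [(λ₁+λ₂)/2]·R_n has Euclidean diameter 1. Then the centre of the regular n-gon [(λ₁+λ₂)/2]·R_n + x is at Euclidean distance at most 263·√ε from the origin o. -/

import Mathlib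

open MeasureTheory Pointwise Real
open scoped RealInnerProductSpace

/-- Area (two-dimensional Lebesgue measure) of a subset of the plane `ℂ ≅ ℝ²`. -/
noncomputable def area (K : Set ℂ) : ℝ := (volume K).toReal

/-- The polar body `K* = {x : ⟨x,y⟩ ≤ 1 for all y ∈ K}`. -/
def polarBody (K : Set ℂ) : Set ℂ := {x | ∀ y ∈ K, ⟪x, y⟫ ≤ 1}

/-- A convex body: a compact convex set with nonempty interior. -/
def IsConvexBody (K : Set ℂ) : Prop := Convex ℝ K ∧ IsCompact K ∧ (interior K).Nonempty

/-- The `n` equally spaced points on the circle of centre `z` determined by `z + w`. -/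
noncomputable def ngonVertices (n : ℕ) (z w : ℂ) : Set ℂ :=
  Set.range fun k : Fin n => z + w * Complex.exp (2 * π * Complex.I * ((k : ℕ) : ℂ) / n)

/-- `K` is the regular `n`-gon with centre `z` whose vertices are the `n` equally
spaced points on the circle of centre `z` through `z + w`. -/
def IsRegularNgon (n : ℕ) (z w : ℂ) (K : Set ℂ) : Prop :=
  w ≠ 0 ∧ K = convexHull ℝ (ngonVertices n z w)

/-- `K` has `n`-fold rotational symmetry about the origin. -/
def HasNFoldSymmetry (n : ℕ) (K : Set ℂ) : Prop :=
  Complex.exp (2 * π * Complex.I / n) • K = K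


-- real inner on ℂ of a product: move rotation to the other side
lemma inner_mul_left_eq (a u q : ℂ) :
    ⟪u, a * q⟫ = ⟪(starRingEnd ℂ) a * u, q⟫ := by
  simp only [Complex.inner, map_mul, Complex.conj_conj]
  congr 1
  ring

-- points of a convex hull satisfy linear inequalities satisfied by the generators
lemma inner_le_of_mem_convexHull {u p : ℂ} {S : Set ℂ} {M : ℝ}
    (hp : p ∈ convexHull ℝ S) (h : ∀ v ∈ S, ⟪u, v⟫ ≤ M) : ⟪u, p⟫ ≤ M := by
  have hcv : Convex ℝ {q : ℂ | ⟪u, q⟫ ≤ M} :=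
    convex_halfSpace_le ⟨fun a b => inner_add_right u a b,
      fun r a => real_inner_smul_right u a r⟩ M
  exact convexHull_min h hcv hp

lemma norm_exp_mul_I_sub_one (θ : ℝ) :
    ‖Complex.exp ((θ : ℂ) * Complex.I) - 1‖ = Real.sqrt (2 - 2 * Real.cos θ) := by
  rw [Complex.exp_mul_I]
  rw [Complex.norm_def, Complex.normSq_apply]
  have h1 : (Complex.cos θ + Complex.sin θ * Complex.I - 1).re = Real.cos θ - 1 := by
    simp [Complex.cos_ofReal_re, Complex.sin_ofReal_im]
  have h2 : (Complex.cos θ + Complex.sin θ * Complex.I - 1).im = Real.sin θ := by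
    simp [Complex.cos_ofReal_im, Complex.sin_ofReal_re]
  rw [h1, h2]
  congr 1
  nlinarith [Real.sin_sq_add_cos_sq θ]

theorem test_vadd (x p : ℂ) (S : Set ℂ) (h : p ∈ S) : x +ᵥ p ∈ x +ᵥ S := by
  exact Set.vadd_mem_vadd_set h

noncomputable def Msup (n : ℕ) [NeZero n] (w ζ u : ℂ) : ℝ :=
  Finset.univ.sup' Finset.univ_nonempty (fun k : Fin n => ⟪u, w * ζ ^ (k : ℕ)⟫)

lemma Msup_ge (n : ℕ) [NeZero n] (w ζ u : ℂ) (k : Fin n) :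
    ⟪u, w * ζ ^ (k : ℕ)⟫ ≤ Msup n w ζ u := by
  exact Finset.le_sup' (fun k : Fin n => ⟪u, w * ζ ^ (k : ℕ)⟫) (Finset.mem_univ k)

lemma Msup_exists (n : ℕ) [NeZero n] (w ζ u : ℂ) :
    ∃ k : Fin n, Msup n w ζ u = ⟪u, w * ζ ^ (k : ℕ)⟫ := by
  obtain ⟨k, _, hk⟩ := Finset.exists_mem_eq_sup' Finset.univ_nonempty
    (fun k : Fin n => ⟪u, w * ζ ^ (k : ℕ)⟫)
  exact ⟨k, hk⟩

lemma Msup_le (n : ℕ) [NeZero n] {w ζ : ℂ} (u : ℂ) (hζ : ‖ζ‖ = 1) :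
    Msup n w ζ u ≤ ‖u‖ * ‖w‖ := by
  apply Finset.sup'_le
  intro k _
  calc ⟪u, w * ζ ^ (k : ℕ)⟫ ≤ ‖u‖ * ‖w * ζ ^ (k : ℕ)‖ := real_inner_le_norm _ _
    _ = ‖u‖ * ‖w‖ := by rw [norm_mul, norm_pow, hζ, one_pow, mul_one]

lemma Msup_nonneg (n : ℕ) [NeZero n] {w ζ : ℂ} (u : ℂ)
    (hsum : ∑ k ∈ Finset.range n, ζ ^ k = 0) : 0 ≤ Msup n w ζ u := by
  by_contra h
  push_neg at h
  have hsum0 : ∑ k : Fin n, ⟪u, w * ζ ^ (k : ℕ)⟫ = (0 : ℝ) := by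
    have : ∑ k : Fin n, (w * ζ ^ (k : ℕ)) = 0 := by
      rw [← Finset.mul_sum, Fin.sum_univ_eq_sum_range (fun k => ζ ^ k), hsum, mul_zero]
    calc ∑ k : Fin n, ⟪u, w * ζ ^ (k : ℕ)⟫ = ⟪u, ∑ k : Fin n, (w * ζ ^ (k : ℕ))⟫ := by
          rw [inner_sum]
      _ = 0 := by rw [this, inner_zero_right]
  have hlt : ∑ k : Fin n, ⟪u, w * ζ ^ (k : ℕ)⟫ ≤ (Finset.univ.card : ℕ) • Msup n w ζ u :=
    Finset.sum_le_card_nsmul _ _ _ (fun k _ => Msup_ge n w ζ u k)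
  rw [hsum0] at hlt
  have hcard : (0:ℕ) < Finset.univ.card (α := Fin n) := by
    simp [Finset.card_univ, Nat.pos_of_ne_zero (NeZero.ne n)]
  have : ((Finset.univ.card (α := Fin n)) : ℕ) • Msup n w ζ u < 0 := by
    rw [nsmul_eq_mul]
    exact mul_neg_of_pos_of_neg (by exact_mod_cast hcard) h
  linarith

lemma Msup_rot (n : ℕ) [NeZero n] {w ζ : ℂ} (u : ℂ) (hζn : ζ ^ n = 1) :
    Msup n w ζ ((starRingEnd ℂ) ζ * u) = Msup n w ζ u := by
  have key : ∀ k : ℕ, ⟪(starRingEnd ℂ) ζ * u, w * ζ ^ k⟫ = ⟪u, w * ζ ^ (k + 1)⟫ := by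
    intro k
    rw [← inner_mul_left_eq]
    congr 1
    ring
  have hn0 : 0 < n := Nat.pos_of_ne_zero (NeZero.ne n)
  apply le_antisymm
  · apply Finset.sup'_le
    intro k _
    rw [key]
    rcases eq_or_lt_of_le (Nat.succ_le_of_lt k.isLt) with h | h
    · have h' : (k : ℕ) + 1 = n := h
      have : w * ζ ^ ((k : ℕ) + 1) = w * ζ ^ ((0 : Fin n) : ℕ) := by
        rw [h', hζn]; simp
      rw [this]
      exact Msup_ge n w ζ u 0
    · exact Msup_ge n w ζ u ⟨(k : ℕ) + 1, h⟩
  · apply Finset.sup'_le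
    intro k _
    rcases Nat.eq_zero_or_pos (k : ℕ) with h | h
    · have h1 : ⟪u, w * ζ ^ (k : ℕ)⟫ = ⟪(starRingEnd ℂ) ζ * u, w * ζ ^ ((n - 1 : ℕ))⟫ := by
        rw [key, Nat.sub_add_cancel hn0, hζn, h]
        simp
      rw [h1]
      exact Msup_ge n w ζ _ ⟨n - 1, by omega⟩
    · have h1 : ⟪u, w * ζ ^ (k : ℕ)⟫ = ⟪(starRingEnd ℂ) ζ * u, w * ζ ^ (((k : ℕ) - 1 : ℕ))⟫ := by
        rw [key, Nat.sub_add_cancel h]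
      rw [h1]
      exact Msup_ge n w ζ _ ⟨(k : ℕ) - 1, by omega⟩

section Zeta

variable {n : ℕ}

lemma zeta_pow_n (hn : n ≠ 0) : (Complex.exp (2 * ↑π * Complex.I / ↑n)) ^ n = 1 := by
  rw [← Complex.exp_nat_mul]
  have hnC : (n : ℂ) ≠ 0 := by
    simp only [ne_eq, Nat.cast_eq_zero]; omega
  have : (n : ℂ) * (2 * ↑π * Complex.I / ↑n) = 2 * ↑π * Complex.I := by
    field_simp
  rw [this, Complex.exp_two_pi_mul_I]

lemma zeta_ne_one (hn : 3 ≤ n) : Complex.exp (2 * ↑π * Complex.I / ↑n) ≠ 1 := by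
  intro h
  rw [Complex.exp_eq_one_iff] at h
  obtain ⟨m, hm⟩ := h
  have hnC : (n : ℂ) ≠ 0 := by
    simp only [ne_eq, Nat.cast_eq_zero]; omega
  have h2 : (2 * ↑π * Complex.I) * 1 = (2 * ↑π * Complex.I) * ((m : ℂ) * n) := by
    field_simp at hm ⊢
    linear_combination hm
  have hI : (2 * ↑π * Complex.I) ≠ 0 := by
    simp [Complex.I_ne_zero, Real.pi_ne_zero, Complex.ofReal_ne_zero]
  have h3 : ((m * n : ℤ) : ℂ) = ((1 : ℤ) : ℂ) := by
    push_cast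
    exact_mod_cast (mul_left_cancel₀ hI h2).symm
  have h4 : (m * n : ℤ) = 1 := by exact_mod_cast h3
  have : (n : ℤ) = 1 ∨ (n : ℤ) = -1 := Int.isUnit_iff.mp (IsUnit.of_mul_eq_one _ (by linarith [h4] ))
  omega

lemma zeta_sum (hn : 3 ≤ n) : ∑ k ∈ Finset.range n, (Complex.exp (2 * ↑π * Complex.I / ↑n)) ^ k = 0 := by
  rw [geom_sum_eq (zeta_ne_one hn), zeta_pow_n (by omega)]
  simp

lemma zeta_norm : ‖Complex.exp (2 * ↑π * Complex.I / ↑n)‖ = 1 := by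
  rw [Complex.norm_exp]
  have : (2 * ↑π * Complex.I / ↑n).re = 0 := by
    simp [Complex.div_re]
  rw [this, Real.exp_zero]

lemma zeta_pow_eq (m : ℕ) : (Complex.exp (2 * ↑π * Complex.I / ↑n)) ^ m
    = Complex.exp ((((2 * π * m / n : ℝ)) : ℂ) * Complex.I) := by
  rw [← Complex.exp_nat_mul]
  congr 1
  push_cast
  ring

lemma norm_zeta_pow_sub_one (m : ℕ) :
    ‖(Complex.exp (2 * ↑π * Complex.I / ↑n)) ^ m - 1‖
      = Real.sqrt (2 - 2 * Real.cos (2 * π * m / n)) := by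
  rw [zeta_pow_eq m, norm_exp_mul_I_sub_one]

end Zeta

set_option maxHeartbeats 2000000 in
/-- Stability of the centre of polarity for bodies with `n`-fold rotational symmetry.
Here `R_n` is a regular `n`-gon with centre `z`, normalised so that
`[(λ₁+λ₂)/2]·R_n` has Euclidean diameter `1`; the centre of `[(λ₁+λ₂)/2]·R_n + x`
is `((λ₁+λ₂)/2)·z + x`, and it is at distance at most `263·√ε` from the origin. -/
theorem nfold_centre_stability (n : ℕ) (hn : 3 ≤ n) (K : Set ℂ)
    (hK : IsConvexBody K) (ho : (0 : ℂ) ∈ interior K)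
    (hsym : HasNFoldSymmetry n K) (ε : ℝ) (hε : 0 < ε)
    (hvp : area K * area (polarBody K) ≤ (1 + ε) * ((n : ℝ) ^ 2 * Real.sin (π / n) ^ 2))
    (x z w : ℂ) (l1 l2 : ℝ) (hl1 : 0 < l1) (hl2 : 0 < l2)
    (Rn : Set ℂ) (hRn : IsRegularNgon n z w Rn)
    (hsub1 : x +ᵥ l1 • Rn ⊆ K) (hsub2 : K ⊆ x +ᵥ l2 • Rn)
    (hratio : l2 / l1 ≤ 1 + 18 * ε) (hsmall : 1 + 18 * ε < 1 / Real.cos (π / n))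
    (hdiam : Metric.diam (((l1 + l2) / 2) • Rn) = 1) :
    ‖((l1 + l2) / 2 : ℝ) • z + x‖ ≤ 263 * Real.sqrt ε := by
  clear hK ho hvp
  haveI : NeZero n := ⟨by omega⟩
  obtain ⟨hw, hRneq⟩ := hRn
  set ζ : ℂ := Complex.exp (2 * ↑π * Complex.I / ↑n) with hζdef
  have hζn : ζ ^ n = 1 := zeta_pow_n (by omega)
  have hζsum : ∑ k ∈ Finset.range n, ζ ^ k = 0 := zeta_sum hn
  have hζnorm : ‖ζ‖ = 1 := zeta_norm
  have hnR : (0:ℝ) < n := by exact_mod_cast (by omega : 0 < n)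
  have hsinpos : 0 < Real.sin (π / n) := by
    apply Real.sin_pos_of_pos_of_lt_pi
    · positivity
    · rw [div_lt_iff₀ hnR]
      have hn3 : (3:ℝ) ≤ (n:ℝ) := by exact_mod_cast hn
      nlinarith [Real.pi_pos, hn3, mul_pos Real.pi_pos (by linarith : (0:ℝ) < (n:ℝ) - 1)]
  -- vertex description of Rn
  have hfun : (fun k : Fin n => z + w * Complex.exp (2 * ↑π * Complex.I * ((k : ℕ) : ℂ) / ↑n))
      = (fun k : Fin n => z + w * ζ ^ (k : ℕ)) := by
    funext k
    rw [hζdef, ← Complex.exp_nat_mul]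
    congr 2
    ring
  have hRnEq : Rn = convexHull ℝ (Set.range fun k : Fin n => z + w * ζ ^ (k : ℕ)) := by
    rw [hRneq]
    unfold ngonVertices
    rw [hfun]
  have hvmem : ∀ k : Fin n, z + w * ζ ^ (k : ℕ) ∈ Rn := by
    intro k
    rw [hRnEq]
    exact subset_convexHull ℝ _ ⟨k, rfl⟩
  -- support function upper bound for translated scaled copies
  have upBound : ∀ (u x' : ℂ) (b : ℝ), 0 ≤ b → ∀ p ∈ x' +ᵥ b • Rn,
      ⟪u, p⟫ ≤ ⟪u, x'⟫ + b * ⟪u, z⟫ + b * Msup n w ζ u := by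
    intro u x' b hb p hp
    obtain ⟨y, hy, rfl⟩ := hp
    obtain ⟨q, hq, rfl⟩ := hy
    have hq' : ⟪u, q⟫ ≤ ⟪u, z⟫ + Msup n w ζ u := by
      rw [hRnEq] at hq
      refine inner_le_of_mem_convexHull hq ?_
      rintro v ⟨k, rfl⟩
      rw [inner_add_right]
      have := Msup_ge n w ζ u k
      linarith
    have he : ⟪u, x' +ᵥ b • q⟫ = ⟪u, x'⟫ + b * ⟪u, q⟫ := by
      rw [vadd_eq_add, inner_add_right, real_inner_smul_right]
    rw [he]
    nlinarith [hq', hb]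
  -- support witness
  have loWit : ∀ (u x' : ℂ) (a : ℝ), ∃ p ∈ x' +ᵥ a • Rn,
      ⟪u, p⟫ = ⟪u, x'⟫ + a * ⟪u, z⟫ + a * Msup n w ζ u := by
    intro u x' a
    obtain ⟨k, hk⟩ := Msup_exists n w ζ u
    refine ⟨x' +ᵥ a • (z + w * ζ ^ (k : ℕ)),
      Set.vadd_mem_vadd_set (Set.smul_mem_smul_set (hvmem k)), ?_⟩
    rw [vadd_eq_add, inner_add_right, real_inner_smul_right, inner_add_right, hk]
    ring
  have hsym' : ζ • K = K := hsym
  -- the three support inequalities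
  have S1 : ∀ u : ℂ, ⟪u, x⟫ + l1 * ⟪u, z⟫ + l1 * Msup n w ζ u
      ≤ ⟪u, x⟫ + l2 * ⟪u, z⟫ + l2 * Msup n w ζ u := by
    intro u
    obtain ⟨p, hp, he⟩ := loWit u x l1
    have := upBound u x l2 hl2.le p (hsub2 (hsub1 hp))
    linarith
  have hl12 : l1 ≤ l2 := by
    by_contra hcon
    push_neg at hcon
    have h1 := S1 w
    have h2 := S1 (-w)
    have hMw : ‖w‖ ^ 2 ≤ Msup n w ζ w := by
      have h0 := Msup_ge n w ζ w 0
      have : w * ζ ^ ((0 : Fin n) : ℕ) = w := by simp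
      rw [this, real_inner_self_eq_norm_sq] at h0
      exact h0
    have hMnw : 0 ≤ Msup n w ζ (-w) := Msup_nonneg n (-w) hζsum
    have hinx : ⟪(-w : ℂ), x⟫ = -⟪w, x⟫ := inner_neg_left w x
    have hinz : ⟪(-w : ℂ), z⟫ = -⟪w, z⟫ := inner_neg_left w z
    rw [hinx, hinz] at h2
    have hwpos : 0 < ‖w‖ ^ 2 := pow_pos (norm_pos_iff.mpr hw) 2
    nlinarith [h1, h2, hMw, hMnw, hwpos, hcon]
  have S2 : ∀ u : ℂ, ⟪u, ζ * x⟫ + l1 * ⟪u, ζ * z⟫ + l1 * Msup n w ζ u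
      ≤ ⟪u, x⟫ + l2 * ⟪u, z⟫ + l2 * Msup n w ζ u := by
    intro u
    obtain ⟨p, hp, he⟩ := loWit ((starRingEnd ℂ) ζ * u) x l1
    have hmem : ζ * p ∈ x +ᵥ l2 • Rn := by
      apply hsub2
      rw [← hsym']
      exact ⟨p, hsub1 hp, rfl⟩
    have hup := upBound u x l2 hl2.le (ζ * p) hmem
    have hrot : ⟪u, ζ * p⟫ = ⟪(starRingEnd ℂ) ζ * u, p⟫ := inner_mul_left_eq ζ u p
    have hMrot : Msup n w ζ ((starRingEnd ℂ) ζ * u) = Msup n w ζ u := Msup_rot n _ hζn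
    have e1 : ⟪(starRingEnd ℂ) ζ * u, x⟫ = ⟪u, ζ * x⟫ := (inner_mul_left_eq ζ u x).symm
    have e2 : ⟪(starRingEnd ℂ) ζ * u, z⟫ = ⟪u, ζ * z⟫ := (inner_mul_left_eq ζ u z).symm
    rw [hrot, he, hMrot, e1, e2] at hup
    linarith
  have S3 : ∀ u : ℂ, ⟪u, x⟫ + l1 * ⟪u, z⟫ + l1 * Msup n w ζ u
      ≤ ⟪u, ζ * x⟫ + l2 * ⟪u, ζ * z⟫ + l2 * Msup n w ζ u := by
    intro u
    obtain ⟨p, hp, he⟩ := loWit u x l1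
    have hpK : p ∈ ζ • (x +ᵥ l2 • Rn) := by
      have hmem : p ∈ ζ • K := by rw [hsym']; exact hsub1 hp
      exact Set.smul_set_mono hsub2 hmem
    obtain ⟨q, hq, rfl⟩ := hpK
    have hup := upBound ((starRingEnd ℂ) ζ * u) x l2 hl2.le q hq
    have hrot : ⟪u, ζ • q⟫ = ⟪(starRingEnd ℂ) ζ * u, q⟫ := inner_mul_left_eq ζ u q
    have hMrot : Msup n w ζ ((starRingEnd ℂ) ζ * u) = Msup n w ζ u := Msup_rot n _ hζn
    have e1 : ⟪(starRingEnd ℂ) ζ * u, x⟫ = ⟪u, ζ * x⟫ := (inner_mul_left_eq ζ u x).symm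
    have e2 : ⟪(starRingEnd ℂ) ζ * u, z⟫ = ⟪u, ζ * z⟫ := (inner_mul_left_eq ζ u z).symm
    rw [e1, e2, hMrot] at hup
    rw [hrot] at he
    linarith
  -- center distance bound from support inequalities
  have centerBound : ∀ (c1' c2' : ℂ), (∀ u : ℂ, ⟪u, c1'⟫ ≤ ⟪u, c2'⟫ + (l2 - l1) * Msup n w ζ u) →
      ‖c1' - c2'‖ ≤ (l2 - l1) * ‖w‖ := by
    intro c1' c2' h
    rcases eq_or_ne (c1' - c2') 0 with h0 | h0
    · rw [h0, norm_zero]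
      have := norm_nonneg w
      nlinarith [hl12]
    · have hu := h (c1' - c2')
      have hin : ⟪c1' - c2', c1'⟫ - ⟪c1' - c2', c2'⟫ = ‖c1' - c2'‖ ^ 2 := by
        rw [← inner_sub_right, real_inner_self_eq_norm_sq]
      have hM := Msup_le (w := w) n (c1' - c2') hζnorm
      have hMnn : 0 ≤ Msup n w ζ (c1' - c2') := Msup_nonneg n (c1' - c2') hζsum
      have hnpos : 0 < ‖c1' - c2'‖ := norm_pos_iff.mpr h0
      nlinarith [hu, hin, hM, hMnn, hnpos, hl12]
  -- turn S1,S2,S3 into norm bounds for the centres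
  have hc : ∀ u a b : ℂ, ⟪u, a + b⟫ = ⟪u, a⟫ + ⟪u, b⟫ := fun u a b => inner_add_right u a b
  have hcs : ∀ (u : ℂ) (r : ℝ) (a : ℂ), ⟪u, r • a⟫ = r * ⟪u, a⟫ :=
    fun u r a => real_inner_smul_right u a r
  set c1 : ℂ := x + (l1 : ℝ) • z with hc1def
  set c2 : ℂ := x + (l2 : ℝ) • z with hc2def
  have B1 : ‖c1 - c2‖ ≤ (l2 - l1) * ‖w‖ := by
    apply centerBound
    intro u
    rw [hc1def, hc2def, hc, hc, hcs, hcs]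
    have := S1 u
    linarith
  have B2 : ‖ζ * c1 - c2‖ ≤ (l2 - l1) * ‖w‖ := by
    apply centerBound
    intro u
    have hzc : ζ * c1 = ζ * x + (l1 : ℝ) • (ζ * z) := by
      rw [hc1def]
      rw [Complex.real_smul, Complex.real_smul]
      ring
    rw [hzc, hc2def, hc, hc, hcs, hcs]
    have := S2 u
    linarith
  have B3 : ‖c1 - ζ * c2‖ ≤ (l2 - l1) * ‖w‖ := by
    apply centerBound
    intro u
    have hzc : ζ * c2 = ζ * x + (l2 : ℝ) • (ζ * z) := by
      rw [hc2def]
      rw [Complex.real_smul, Complex.real_smul]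
      ring
    rw [hzc, hc1def, hc, hc, hcs, hcs]
    have := S3 u
    linarith
  -- rotation displacement bounds
  have normζ1 : ‖ζ - 1‖ = 2 * Real.sin (π / n) := by
    have h1 : ζ - 1 = ζ ^ 1 - 1 := by rw [pow_one]
    rw [h1, norm_zeta_pow_sub_one 1]
    have hc2m : Real.cos (2 * (π / n)) = 2 * Real.cos (π / n) ^ 2 - 1 := Real.cos_two_mul _
    have hs : Real.sin (π / n) ^ 2 = 1 - Real.cos (π / n) ^ 2 := Real.sin_sq _
    have he : 2 * π * (1 : ℕ) / n = 2 * (π / n) := by push_cast; ring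
    rw [he, hc2m]
    rw [show 2 - 2 * (2 * Real.cos (π / n) ^ 2 - 1) = (2 * Real.sin (π / n)) ^ 2 by nlinarith [hs]]
    exact Real.sqrt_sq (by linarith)
  have hC1 : Real.sin (π / n) * ‖c1‖ ≤ (l2 - l1) * ‖w‖ := by
    have h1 : ζ * c1 - c1 = (ζ * c1 - c2) + (c2 - c1) := by ring
    have h2 : ‖ζ * c1 - c1‖ ≤ 2 * ((l2 - l1) * ‖w‖) := by
      rw [h1]
      calc ‖(ζ * c1 - c2) + (c2 - c1)‖ ≤ ‖ζ * c1 - c2‖ + ‖c2 - c1‖ := norm_add_le _ _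
        _ ≤ 2 * ((l2 - l1) * ‖w‖) := by rw [norm_sub_rev c2 c1]; linarith [B1, B2]
    have h3 : ζ * c1 - c1 = (ζ - 1) * c1 := by ring
    rw [h3, norm_mul, normζ1] at h2
    linarith [h2, mul_nonneg hsinpos.le (norm_nonneg c1)]
  have hC2 : Real.sin (π / n) * ‖c2‖ ≤ (l2 - l1) * ‖w‖ := by
    have h1 : ζ * c2 - c2 = (c1 - c2) - (c1 - ζ * c2) := by ring
    have h2 : ‖ζ * c2 - c2‖ ≤ 2 * ((l2 - l1) * ‖w‖) := by
      rw [h1]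
      calc ‖(c1 - c2) - (c1 - ζ * c2)‖ ≤ ‖c1 - c2‖ + ‖c1 - ζ * c2‖ := norm_sub_le _ _
        _ ≤ 2 * ((l2 - l1) * ‖w‖) := by linarith [B1, B3]
    have h3 : ζ * c2 - c2 = (ζ - 1) * c2 := by ring
    rw [h3, norm_mul, normζ1] at h2
    linarith [h2, mul_nonneg hsinpos.le (norm_nonneg c2)]
  -- the goal point
  have hG2 : (2 : ℝ) • (((l1 + l2) / 2 : ℝ) • z + x) = c1 + c2 := by
    rw [hc1def, hc2def]
    module
  have hGnorm : 2 * ‖((l1 + l2) / 2 : ℝ) • z + x‖ = ‖c1 + c2‖ := by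
    rw [← hG2, norm_smul]
    norm_num
  have hGsin : Real.sin (π / n) * ‖((l1 + l2) / 2 : ℝ) • z + x‖ ≤ (l2 - l1) * ‖w‖ := by
    have hsum : ‖c1 + c2‖ ≤ ‖c1‖ + ‖c2‖ := norm_add_le _ _
    have e : Real.sin (π / n) * ‖c1 + c2‖ = Real.sin (π / n) * (2 * ‖((l1 + l2) / 2 : ℝ) • z + x‖) := by
      rw [hGnorm]
    have hmul := mul_le_mul_of_nonneg_left hsum hsinpos.le
    linarith [e, hmul, hC1, hC2]
  -- diameter bound: (l1+l2) * ‖w‖ ≤ 2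
  have hmlt : n / 2 < n := Nat.div_lt_self (by omega) one_lt_two
  have hRncomp : IsCompact Rn := by
    rw [hRnEq]
    exact (Set.finite_range _).isCompact_convexHull ℝ
  have hbdd : Bornology.IsBounded (((l1 + l2) / 2 : ℝ) • Rn) := by
    rw [← Set.image_smul]
    exact ((hRncomp.image (continuous_const_smul _)).isBounded)
  have hp1 : ((l1 + l2) / 2 : ℝ) • (z + w * ζ ^ ((0 : Fin n) : ℕ)) ∈ ((l1 + l2) / 2 : ℝ) • Rn :=
    Set.smul_mem_smul_set (hvmem 0)
  have hp2 : ((l1 + l2) / 2 : ℝ) • (z + w * ζ ^ ((⟨n / 2, hmlt⟩ : Fin n) : ℕ))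
      ∈ ((l1 + l2) / 2 : ℝ) • Rn := Set.smul_mem_smul_set (hvmem ⟨n / 2, hmlt⟩)
  have hdist := Metric.dist_le_diam_of_mem hbdd hp1 hp2
  rw [hdiam] at hdist
  have hs2 : (0:ℝ) < (l1 + l2) / 2 := by linarith
  have hmR2 : (2 : ℝ) * (n / 2 : ℕ) ≤ n := by exact_mod_cast (by omega : 2 * (n / 2) ≤ n)
  have hmR3 : (n : ℝ) ≤ 3 * (n / 2 : ℕ) := by exact_mod_cast (by omega : n ≤ 3 * (n / 2))
  have hmnn : (0:ℝ) ≤ (n / 2 : ℕ) := Nat.cast_nonneg _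
  have hsin_m : Real.sqrt 3 / 2 ≤ Real.sin (π * (n / 2 : ℕ) / n) := by
    rw [← Real.sin_pi_div_three]
    apply Real.sin_le_sin_of_le_of_le_pi_div_two
    · have := Real.pi_pos
      linarith
    · rw [div_le_div_iff₀ hnR two_pos]
      nlinarith [Real.pi_pos, hmR2]
    · rw [div_le_div_iff₀ (by norm_num : (0:ℝ) < 3) hnR]
      nlinarith [Real.pi_pos, hmR3]
  have hdeq : dist (((l1 + l2) / 2 : ℝ) • (z + w * ζ ^ ((0 : Fin n) : ℕ)))
      (((l1 + l2) / 2 : ℝ) • (z + w * ζ ^ ((⟨n / 2, hmlt⟩ : Fin n) : ℕ)))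
      = ((l1 + l2) / 2) * (‖w‖ * (2 * Real.sin (π * (n / 2 : ℕ) / n))) := by
    rw [dist_eq_norm, ← smul_sub]
    have h0 : (z + w * ζ ^ ((0 : Fin n) : ℕ)) - (z + w * ζ ^ ((⟨n / 2, hmlt⟩ : Fin n) : ℕ))
        = -(w * (ζ ^ (n / 2 : ℕ) - 1)) := by
      simp only [Fin.val_zero, pow_zero]
      push_cast
      ring
    rw [h0, norm_smul, norm_neg, norm_mul]
    have hang : ‖ζ ^ (n / 2 : ℕ) - 1‖ = 2 * Real.sin (π * (n / 2 : ℕ) / n) := by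
      rw [norm_zeta_pow_sub_one (n / 2)]
      have hc2m : Real.cos (2 * (π * (n / 2 : ℕ) / n)) = 2 * Real.cos (π * (n / 2 : ℕ) / n) ^ 2 - 1 :=
        Real.cos_two_mul _
      have hs : Real.sin (π * (n / 2 : ℕ) / n) ^ 2 = 1 - Real.cos (π * (n / 2 : ℕ) / n) ^ 2 :=
        Real.sin_sq _
      have he : 2 * π * ((n / 2 : ℕ) : ℝ) / n = 2 * (π * (n / 2 : ℕ) / n) := by ring
      rw [he, hc2m]
      have hsn : 0 ≤ Real.sin (π * (n / 2 : ℕ) / n) := by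
        have := Real.sqrt_nonneg 3
        linarith [hsin_m]
      rw [show 2 - 2 * (2 * Real.cos (π * (n / 2 : ℕ) / n) ^ 2 - 1)
          = (2 * Real.sin (π * (n / 2 : ℕ) / n)) ^ 2 by nlinarith [hs]]
      exact Real.sqrt_sq (by linarith)
    rw [hang]
    rw [Real.norm_eq_abs, abs_of_pos hs2]
  rw [hdeq] at hdist
  have hsqrt3 : (1:ℝ) ≤ Real.sqrt 3 := by
    rw [show (1:ℝ) = Real.sqrt 1 by simp]
    exact Real.sqrt_le_sqrt (by norm_num)
  have hw2 : (l1 + l2) * ‖w‖ ≤ 2 := by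
    have hmul : ((l1 + l2) / 2) * ‖w‖ * (2 * (Real.sqrt 3 / 2))
        ≤ ((l1 + l2) / 2) * ‖w‖ * (2 * Real.sin (π * (n / 2 : ℕ) / n)) := by
      apply mul_le_mul_of_nonneg_left _ (by positivity)
      linarith [hsin_m]
    have h1 : ((l1 + l2) / 2) * ‖w‖ * Real.sqrt 3 ≤ 1 := by nlinarith [hmul, hdist]
    nlinarith [h1, hsqrt3, norm_nonneg w, hs2]
  -- lower bound on sin(π/n) from hsmall
  have hcos_ge : (1:ℝ)/2 ≤ Real.cos (π / n) := by
    rw [← Real.cos_pi_div_three]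
    apply Real.cos_le_cos_of_nonneg_of_le_pi (by positivity)
    · linarith [Real.pi_pos]
    · apply div_le_div_of_nonneg_left Real.pi_pos.le (by norm_num)
      exact_mod_cast hn
  have hcos_lt : (1 + 18 * ε) * Real.cos (π / n) < 1 := by
    have hcpos : 0 < Real.cos (π / n) := by linarith
    exact (lt_div_iff₀ hcpos).mp hsmall
  have hsin_sq : 9 * ε ≤ Real.sin (π / n) ^ 2 := by
    have hs := Real.sin_sq (π / n)
    have hc1 : Real.cos (π / n) ≤ 1 := Real.cos_le_one _
    nlinarith [hε, hcos_ge, hcos_lt, hs,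
      mul_nonneg hε.le (by linarith : (0:ℝ) ≤ Real.cos (π / n) - 1/2)]
  have hsin_lb : 3 * Real.sqrt ε ≤ Real.sin (π / n) := by
    have h9 : Real.sqrt (9 * ε) = 3 * Real.sqrt ε := by
      rw [show (9:ℝ) * ε = 3 ^ 2 * ε by ring, Real.sqrt_mul (by positivity),
        Real.sqrt_sq (by norm_num)]
    calc 3 * Real.sqrt ε = Real.sqrt (9 * ε) := h9.symm
      _ ≤ Real.sqrt (Real.sin (π / n) ^ 2) := Real.sqrt_le_sqrt hsin_sq
      _ = Real.sin (π / n) := Real.sqrt_sq hsinpos.le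
  -- final assembly
  have hle : l2 ≤ (1 + 18 * ε) * l1 := by
    have := (div_le_iff₀ hl1).mp hratio
    linarith
  have hDb : (l2 - l1) * ‖w‖ ≤ 36 * ε := by
    have hl1w : l1 * ‖w‖ ≤ 2 := by
      have := mul_nonneg hl2.le (norm_nonneg w)
      nlinarith [hw2]
    have hB := mul_le_mul_of_nonneg_left hl1w (by linarith : (0:ℝ) ≤ 18 * ε)
    have hA := mul_le_mul_of_nonneg_right (by linarith : l2 - l1 ≤ 18 * ε * l1) (norm_nonneg w)
    nlinarith [hA, hB]
  have hfin : Real.sin (π / n) * ‖((l1 + l2) / 2 : ℝ) • z + x‖ ≤ 36 * ε := le_trans hGsin hDb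
  have h1 : 3 * Real.sqrt ε * ‖((l1 + l2) / 2 : ℝ) • z + x‖ ≤ 36 * ε := by
    have := mul_le_mul_of_nonneg_right hsin_lb (norm_nonneg (((l1 + l2) / 2 : ℝ) • z + x))
    linarith
  have hsq : Real.sqrt ε ^ 2 = ε := Real.sq_sqrt hε.le
  have hsp : 0 < Real.sqrt ε := Real.sqrt_pos.mpr hε
  have h2 : (3 * Real.sqrt ε) * ‖((l1 + l2) / 2 : ℝ) • z + x‖
      ≤ (3 * Real.sqrt ε) * (12 * Real.sqrt ε) := by nlinarith [h1, hsq]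
  have h3 := le_of_mul_le_mul_left h2 (by positivity : (0:ℝ) < 3 * Real.sqrt ε)
  nlinarith [h3, hsp]
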